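/- arXiv:1406.3698 — 2 statements merged into one kernel-verified Lean document; each statement's English description precedes it below -/
import Mathlib

section
/- For every integer μ ≥ 2 there exist a constant c > 0 and a positive integer J such that for every prime p and every integer j ≥ J, max{τ(p^j + m) : m ∈ ℕ, 1 ≤ m, (m : ℝ) ≤ (p^j)^(1/μ)} ≥ c · ln(ln j) · τ(p^j). -/
def tau (n : ℕ) : ℕ := n.divisors.card

lemma tau_prime_pow {p : ℕ} (hp : p.Prime) (k : ℕ) : tau (p ^ k) = k + 1 := by
  simp [tau, Nat.divisors_prime_pow hp]

/-- For every integer `μ ≥ 2` there are `c > 0` and `J` such that for every prime `p`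
and `j ≥ J`, the maximum of `τ (p^j + m)` over `1 ≤ m ≤ (p^j)^(1/μ)` is at least
`c · ln (ln j) · τ (p^j)`. -/
theorem max_tau_ge_loglog (μ : ℕ) (hμ : 2 ≤ μ) :
    ∃ c : ℝ, 0 < c ∧ ∃ J : ℕ, 0 < J ∧ ∀ p j : ℕ, p.Prime → J ≤ j →
      (((Finset.Icc 1 ⌊((p ^ j : ℕ) : ℝ) ^ (1 / (μ : ℝ))⌋₊).sup
        (fun m => tau (p ^ j + m)) : ℕ) : ℝ)
        ≥ c * Real.log (Real.log j) * (tau (p ^ j) : ℝ) := by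
  have hμ0 : 0 < μ := by omega
  have hμR : (2:ℝ) ≤ μ := by exact_mod_cast hμ
  refine ⟨1 / (18 * (μ:ℝ)^2), by positivity, 3 * μ, by omega, ?_⟩
  intro p j hp hj
  set k := j / (3 * μ) with hk
  set d := 6 ^ k with hd
  have hd1 : 1 ≤ d := Nat.one_le_pow _ _ (by norm_num)
  have hkmul : k * (3 * μ) ≤ j := Nat.div_mul_le_self j (3 * μ)
  have hdpow : d ^ μ ≤ p ^ j := by
    calc d ^ μ = 6 ^ (k * μ) := by rw [hd, ← pow_mul]
    _ ≤ 8 ^ (k * μ) := Nat.pow_le_pow_left (by norm_num) _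
    _ = (2 ^ 3) ^ (k * μ) := by norm_num
    _ = 2 ^ (3 * (k * μ)) := (pow_mul 2 3 (k * μ)).symm
    _ ≤ 2 ^ j := Nat.pow_le_pow_right (by norm_num) (by nlinarith)
    _ ≤ p ^ j := Nat.pow_le_pow_left hp.two_le _
  set m := d - p ^ j % d with hm
  have hmod : p ^ j % d < d := Nat.mod_lt _ (by omega)
  have hdam := Nat.div_add_mod (p ^ j) d
  have hm1 : 1 ≤ m := by omega
  have hmd : m ≤ d := by omega
  have hdvd : d ∣ p ^ j + m := ⟨p ^ j / d + 1, by rw [Nat.mul_add, Nat.mul_one]; omega⟩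
  have hn0 : p ^ j + m ≠ 0 := by omega
  -- tau d = (k+1)^2
  have htaud : (k + 1) ^ 2 ≤ tau (p ^ j + m) := by
    have h6 : d = 2 ^ k * 3 ^ k := by rw [hd, ← Nat.mul_pow]
    have hcop : (2 ^ k).Coprime (3 ^ k) := Nat.Coprime.pow k k (by decide)
    have ht2 : (2 ^ k).divisors.card = k + 1 := tau_prime_pow Nat.prime_two k
    have ht3 : (3 ^ k).divisors.card = k + 1 := tau_prime_pow Nat.prime_three k
    have : tau d = (k + 1) ^ 2 := by
      rw [h6]
      show ((2 ^ k * 3 ^ k).divisors).card = (k+1)^2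
      rw [hcop.card_divisors_mul, ht2, ht3]; ring
    rw [← this]
    exact Finset.card_le_card (Nat.divisors_subset_of_dvd hn0 hdvd)
  -- m is in the range
  have hmem : m ∈ Finset.Icc 1 ⌊((p ^ j : ℕ) : ℝ) ^ (1 / (μ : ℝ))⌋₊ := by
    rw [Finset.mem_Icc]
    refine ⟨hm1, le_trans hmd (Nat.le_floor ?_)⟩
    have hdp : ((d:ℝ)) ^ (μ:ℝ) ≤ ((p ^ j : ℕ) : ℝ) := by
      rw [Real.rpow_natCast]; exact_mod_cast hdpow
    have h1 : ((d:ℝ)) = (((d:ℝ)) ^ (μ:ℝ)) ^ (1 / (μ:ℝ)) := by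
      rw [← Real.rpow_mul (by positivity),
        mul_one_div_cancel (ne_of_gt (by positivity)), Real.rpow_one]
    rw [h1]
    exact Real.rpow_le_rpow (by positivity) hdp (by positivity)
  have hsup : ((k + 1)^2 : ℝ) ≤
      (((Finset.Icc 1 ⌊((p ^ j : ℕ) : ℝ) ^ (1 / (μ : ℝ))⌋₊).sup
        (fun m => tau (p ^ j + m)) : ℕ) : ℝ) := by
    have := Finset.le_sup (f := fun m => tau (p ^ j + m)) hmem
    have h2 : (k+1)^2 ≤ (Finset.Icc 1 ⌊((p ^ j : ℕ) : ℝ) ^ (1 / (μ : ℝ))⌋₊).sup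
        (fun m => tau (p ^ j + m)) := le_trans htaud this
    exact_mod_cast h2
  -- final numeric inequality
  rw [tau_prime_pow hp]
  refine le_trans ?_ hsup
  have hj6 : (6:ℕ) ≤ j := le_trans (by omega) hj
  have hjR : (6:ℝ) ≤ (j:ℕ) := by exact_mod_cast hj6
  have hlog1 : Real.log (Real.log j) ≤ (j:ℝ) := by
    have h1 : Real.log (j:ℝ) ≤ (j:ℝ) := Real.log_le_self (by positivity)
    have h2 : (0:ℝ) < Real.log (j:ℝ) := Real.log_pos (by linarith)
    calc Real.log (Real.log j) ≤ Real.log (j:ℝ) := Real.log_le_log h2 h1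
    _ ≤ (j:ℝ) := h1
  have hjk : j < (k + 1) * (3 * μ) := by
    rw [← Nat.div_lt_iff_lt_mul (by omega)]; omega
  have hjkR : (j:ℝ) + 1 ≤ 3 * (μ:ℝ) * ((k:ℝ) + 1) := by
    have hnat : j + 1 ≤ (k + 1) * (3 * μ) := hjk
    have hR : ((j:ℝ) + 1) ≤ ((k:ℝ) + 1) * (3 * (μ:ℝ)) := by exact_mod_cast hnat
    nlinarith [hR]
  have hstep : Real.log (Real.log j) * ((j:ℝ) + 1) ≤ (j:ℝ) * ((j:ℝ) + 1) :=
    mul_le_mul_of_nonneg_right hlog1 (by positivity)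
  have hjkk : (j:ℝ) * ((j:ℝ)+1) ≤ 9 * (μ:ℝ)^2 * ((k:ℝ)+1)^2 := by nlinarith
  have hgoal : 1 / (18 * (μ:ℝ)^2) * Real.log (Real.log j) * ((j:ℝ) + 1)
      ≤ ((k:ℝ) + 1)^2 := by
    rw [mul_assoc]
    have h9 : Real.log (Real.log j) * ((j:ℝ)+1) ≤ 9 * (μ:ℝ)^2 * ((k:ℝ)+1)^2 :=
      le_trans hstep hjkk
    have hc : (0:ℝ) < 18 * (μ:ℝ)^2 := by positivity
    rw [div_mul_eq_mul_div, one_mul, div_le_iff₀ hc]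
    nlinarith [sq_nonneg ((k:ℝ)+1)]
  calc 1 / (18 * (μ:ℝ)^2) * Real.log (Real.log j) * (((j + 1 : ℕ)):ℝ)
      = 1 / (18 * (μ:ℝ)^2) * Real.log (Real.log j) * ((j:ℝ) + 1) := by push_cast; ring
  _ ≤ ((k:ℝ) + 1)^2 := hgoal
end

section
/- For every integer μ ≥ 2 there exist a constant c > 0 and a positive integer M such that for every integer m ≥ M, ∑_{l=(μ−1)m}^{μm−1} ( Δ(l!) − Δ(((μ−1)m − 1)!) ) ≥ c · m² · ln(ln m). -/
/-- `Δ n = Ω n` is the number of prime factors of `n` counted with multiplicity. -/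
def Delta (n : ℕ) : ℕ := n.primeFactorsList.length

open Finset Nat


lemma Delta_mul {a b : ℕ} (ha : a ≠ 0) (hb : b ≠ 0) : Delta (a*b) = Delta a + Delta b := by
  have := (Nat.perm_primeFactorsList_mul ha hb).length_eq
  simpa [Delta] using this

lemma Delta_factorial_sub {j l : ℕ} (h : j ≤ l) :
    Delta (Nat.factorial l) = Delta (Nat.factorial j) + ∑ k ∈ Icc (j+1) l, Delta k := by
  induction l, h using Nat.le_induction with
  | base => simp
  | succ l hl ih =>
    rw [Nat.factorial_succ, Delta_mul (Nat.succ_ne_zero l) (Nat.factorial_ne_zero l), ih,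
      Finset.sum_Icc_succ_top (by omega)]
    ring

-- distinct prime divisors from a range, ≤ Delta
lemma card_filter_dvd_le_Delta {k : ℕ} (hk : k ≠ 0) (s : Finset ℕ) :
    ((s.filter (fun p => p.Prime ∧ p ∣ k)).card) ≤ Delta k := by
  classical
  calc (s.filter (fun p => p.Prime ∧ p ∣ k)).card
      ≤ k.primeFactors.card := Finset.card_le_card (by
        intro p hp
        simp only [Finset.mem_filter] at hp
        exact Nat.mem_primeFactors.mpr ⟨hp.2.1, hp.2.2, hk⟩)
    _ ≤ Delta k := by
        rw [Nat.primeFactors]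
        exact List.toFinset_card_le _

lemma centralBinom_le (n : ℕ) (hn : 1 ≤ n) :
    centralBinom n ≤ (2*n) ^ ((2*n+1).primesBelow.card) := by
  have hcb : centralBinom n ≠ 0 := (centralBinom_pos n).ne'
  conv_lhs => rw [← Nat.factorization_prod_pow_eq_self hcb]
  rw [Nat.prod_factorization_eq_prod_primeFactors]
  have key : ∀ p ∈ (centralBinom n).primeFactors,
      p ^ (centralBinom n).factorization p ≤ 2*n :=
    fun p _ => Nat.pow_factorization_choose_le (by omega)
  have hsub : (centralBinom n).primeFactors ⊆ (2*n+1).primesBelow := by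
    intro p hp
    have hp' := hp
    rw [Nat.mem_primeFactors] at hp'
    have h1 : p ≤ p ^ (centralBinom n).factorization p := by
      have : 1 ≤ (centralBinom n).factorization p :=
        (Nat.Prime.factorization_pos_of_dvd hp'.1 hcb hp'.2.1)
      calc p = p ^ 1 := (pow_one p).symm
        _ ≤ _ := Nat.pow_le_pow_right hp'.1.pos this
    exact Nat.mem_primesBelow.mpr ⟨by have := key p hp; omega, hp'.1⟩
  calc ∏ p ∈ (centralBinom n).primeFactors, p ^ (centralBinom n).factorization p
      ≤ ∏ p ∈ (centralBinom n).primeFactors, 2*n := Finset.prod_le_prod' key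
    _ = (2*n) ^ (centralBinom n).primeFactors.card := by rw [Finset.prod_const]
    _ ≤ (2*n) ^ ((2*n+1).primesBelow.card) :=
        Nat.pow_le_pow_right (by omega) (Finset.card_le_card hsub)

lemma primesBelow_mono {a b : ℕ} (h : a ≤ b) : a.primesBelow ⊆ b.primesBelow := by
  unfold Nat.primesBelow
  exact Finset.filter_subset_filter _ (Finset.range_subset_range.mpr h)

lemma chebyshev_lower {N : ℕ} (hN : 4096 ≤ N) :
    (N : ℝ) / (8 * Real.log N) ≤ ((N+1).primesBelow.card : ℝ) := by
  set n := N / 2 with hn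
  have hn1 : 1 ≤ n := by omega
  have h2n : 2*n ≤ N := by omega
  have hnat : 4 ^ n ≤ (2*n) ^ ((2*n+1).primesBelow.card + 1) := by
    calc 4 ^ n ≤ 2 * n * centralBinom n := four_pow_le_two_mul_self_mul_centralBinom n (by omega)
      _ ≤ 2 * n * (2*n) ^ ((2*n+1).primesBelow.card) :=
          Nat.mul_le_mul_left _ (centralBinom_le n hn1)
      _ = (2*n) ^ ((2*n+1).primesBelow.card + 1) := by ring
  set π' : ℕ := (2*n+1).primesBelow.card with hπ'
  have hcard : (π' : ℝ) ≤ ((N+1).primesBelow.card : ℝ) := by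
    exact_mod_cast Finset.card_le_card (_root_.primesBelow_mono (by omega))
  have h2npos : (0:ℝ) < 2*(n:ℝ) := by positivity
  have hlog : (n:ℝ) * Real.log 4 ≤ ((π':ℝ) + 1) * Real.log (2*(n:ℝ)) := by
    have := Real.log_le_log (by positivity) (show ((4:ℝ)) ^ n ≤ (2*(n:ℝ)) ^ (π' + 1) by
      calc ((4:ℝ)) ^ n = ((4 ^ n : ℕ) : ℝ) := by push_cast; ring
        _ ≤ (((2*n) ^ (π' + 1) : ℕ) : ℝ) := by exact_mod_cast hnat
        _ = (2*(n:ℝ)) ^ (π' + 1) := by push_cast; ring)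
    rw [Real.log_pow, Real.log_pow] at this
    push_cast at this ⊢
    nlinarith [this]
  -- basic log facts
  have hNpos : (0:ℝ) < N := by positivity
  have hlogN : Real.log (2*(n:ℝ)) ≤ Real.log N := by
    apply Real.log_le_log h2npos
    exact_mod_cast h2n
  have hlogNpos : (0:ℝ) < Real.log N := by
    apply Real.log_pos; exact_mod_cast (by omega : 2 ≤ N) |>.trans_lt' (by norm_num)
  have hlog4 : (1.386:ℝ) ≤ Real.log 4 := by
    have h := Real.log_two_gt_d9
    have : Real.log 4 = 2 * Real.log 2 := by
      rw [show (4:ℝ) = 2^2 by norm_num, Real.log_pow]; push_cast; ring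
    nlinarith
  -- sqrt bound on log N
  have hs : Real.log (N:ℝ) ≤ 2 * Real.sqrt N := by
    have h1 : Real.log (N:ℝ) = 2 * Real.log (Real.sqrt N) := by
      rw [Real.log_sqrt hNpos.le]; ring
    have h2 : Real.log (Real.sqrt N) ≤ Real.sqrt N - 1 :=
      Real.log_le_sub_one_of_pos (Real.sqrt_pos.mpr hNpos)
    nlinarith
  have hsqrt : (64:ℝ) ≤ Real.sqrt N := by
    have : ((4096:ℝ)) ≤ N := by exact_mod_cast hN
    calc (64:ℝ) = Real.sqrt 4096 := by
          rw [show (4096:ℝ) = 64^2 by norm_num, Real.sqrt_sq]; norm_num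
      _ ≤ Real.sqrt N := Real.sqrt_le_sqrt this
  have hsq : (Real.sqrt N)^2 = N := Real.sq_sqrt hNpos.le
  have hnN : ((N:ℝ) - 1)/2 ≤ (n:ℝ) := by
    have h : N ≤ 2 * n + 1 := by omega
    have h' : (N:ℝ) ≤ 2 * (n:ℝ) + 1 := by exact_mod_cast h
    linarith
  -- key: π' ≥ n log4/log(2n) − 1 ≥ N/(8 log N)
  have hlog2n_pos : (0:ℝ) < Real.log (2*(n:ℝ)) := by
    apply Real.log_pos
    have : (2:ℝ) ≤ 2*(n:ℝ) := by
      have : (1:ℝ) ≤ n := by exact_mod_cast hn1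
      linarith
    linarith
  have key : (N:ℝ) / (8 * Real.log N) ≤ (π' : ℝ) := by
    rw [div_le_iff₀ (by positivity)]
    -- hlog : n log4 ≤ (π'+1) log(2n) ≤ (π'+1) log N
    have h1 : (n:ℝ) * Real.log 4 ≤ ((π':ℝ)+1) * Real.log N := by
      have hπnn : (0:ℝ) ≤ (π':ℝ)+1 := by positivity
      nlinarith [hlog, mul_le_mul_of_nonneg_left hlogN hπnn]
    -- so π' log N ≥ n log4 − log N ≥ ((N−1)/2)·1.386 − 2√N ≥ N/8
    have h2 : ((N:ℝ)-1)/2 * (1.386:ℝ) ≤ (n:ℝ) * Real.log 4 := by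
      apply mul_le_mul hnN hlog4 (by norm_num)
      exact Nat.cast_nonneg n
    nlinarith [hs, hsqrt, hsq, hlogNpos]
  linarith

lemma telescope_recip {p : ℕ} (hp : 1 ≤ p) :
    ∀ x : ℕ, p ≤ x + 1 → ∑ n ∈ Icc p x, ((1:ℝ)/n - 1/(n+1)) = 1/p - 1/(x+1) := by
  intro x
  induction x with
  | zero =>
    intro hx
    have : p = 1 := by omega
    subst this; simp
  | succ x ih =>
    intro hx
    rcases Nat.lt_or_ge (x+1) p with h | h
    · have hpx : p = x + 2 := by omega
      subst hpx
      rw [Finset.Icc_eq_empty (by omega)]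
      push_cast
      ring_nf
    · rw [Finset.sum_Icc_succ_top h, ih (by omega)]
      push_cast
      ring

lemma telescope_loglog {a : ℕ} (ha : 1 ≤ a) :
    ∀ x : ℕ, a ≤ x + 1 → ∑ n ∈ Icc a x,
      (Real.log (Real.log ((n:ℝ)+2)) - Real.log (Real.log ((n:ℝ)+1)))
      = Real.log (Real.log ((x:ℝ)+2)) - Real.log (Real.log ((a:ℝ)+1)) := by
  intro x
  induction x with
  | zero =>
    intro hx
    have : a = 1 := by omega
    subst this; norm_num
  | succ x ih =>
    intro hx
    rcases Nat.lt_or_ge (x+1) a with h | h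
    · have hpx : a = x + 2 := by omega
      subst hpx
      rw [Finset.Icc_eq_empty (by omega)]
      push_cast
      rw [show (x:ℝ) + 1 + 2 = (x:ℝ) + 2 + 1 by ring]
      simp
    · rw [Finset.sum_Icc_succ_top h, ih (by omega)]
      push_cast
      ring

lemma loglog_step {n : ℕ} (hn : 2 ≤ n) :
    Real.log (Real.log ((n:ℝ)+2)) - Real.log (Real.log ((n:ℝ)+1))
      ≤ 1 / (((n:ℝ)+1) * Real.log n) := by
  have h1 : (1:ℝ) < (n:ℝ) := by exact_mod_cast (by omega : 1 < n)
  have ha : (0:ℝ) < Real.log ((n:ℝ)+1) := Real.log_pos (by linarith)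
  have hb : (0:ℝ) < Real.log ((n:ℝ)+2) := Real.log_pos (by linarith)
  have hlogn : (0:ℝ) < Real.log n := Real.log_pos h1
  have hmono : Real.log (n:ℝ) ≤ Real.log ((n:ℝ)+1) := Real.log_le_log (by linarith) (by linarith)
  have s1 : Real.log ((n:ℝ)+2) - Real.log ((n:ℝ)+1) ≤ 1/((n:ℝ)+1) := by
    rw [← Real.log_div (by linarith) (by linarith)]
    have := Real.log_le_sub_one_of_pos (show (0:ℝ) < ((n:ℝ)+2)/((n:ℝ)+1) by positivity)
    have heq : ((n:ℝ)+2)/((n:ℝ)+1) - 1 = 1/((n:ℝ)+1) := by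
      field_simp
      ring
    linarith
  have s2 : Real.log (Real.log ((n:ℝ)+2)) - Real.log (Real.log ((n:ℝ)+1))
      ≤ (Real.log ((n:ℝ)+2) - Real.log ((n:ℝ)+1)) / Real.log ((n:ℝ)+1) := by
    rw [← Real.log_div hb.ne' ha.ne']
    have := Real.log_le_sub_one_of_pos (show (0:ℝ) < Real.log ((n:ℝ)+2) / Real.log ((n:ℝ)+1) by positivity)
    have heq : Real.log ((n:ℝ)+2) / Real.log ((n:ℝ)+1) - 1
        = (Real.log ((n:ℝ)+2) - Real.log ((n:ℝ)+1)) / Real.log ((n:ℝ)+1) := by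
      field_simp
    linarith
  have s3 : (Real.log ((n:ℝ)+2) - Real.log ((n:ℝ)+1)) / Real.log ((n:ℝ)+1)
      ≤ 1/(((n:ℝ)+1) * Real.log n) := by
    rw [div_le_div_iff₀ ha (by positivity)]
    calc (Real.log ((n:ℝ)+2) - Real.log ((n:ℝ)+1)) * (((n:ℝ)+1) * Real.log n)
        ≤ (1/((n:ℝ)+1)) * (((n:ℝ)+1) * Real.log n) := by
          apply mul_le_mul_of_nonneg_right s1 (by positivity)
      _ = Real.log n := by field_simp
      _ ≤ 1 * Real.log ((n:ℝ)+1) := by rw [one_mul]; exact hmono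
  linarith

noncomputable def K : ℝ := Real.log (Real.log 4097)

lemma mertens_lower {x : ℕ} (hx : 4096 ≤ x) :
    (1/8) * (Real.log (Real.log ((x:ℝ)+2)) - K) ≤ ∑ p ∈ (x+1).primesBelow, (1:ℝ)/p := by
  have step1 : ∑ p ∈ (x+1).primesBelow, ∑ n ∈ Icc p x, ((1:ℝ)/n - 1/(n+1))
      ≤ ∑ p ∈ (x+1).primesBelow, (1:ℝ)/p := by
    apply Finset.sum_le_sum
    intro p hp
    rw [Nat.mem_primesBelow] at hp
    have h2 : 1 ≤ p := hp.2.one_lt.le.trans' (by norm_num)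
    rw [telescope_recip h2 x (by omega)]
    have : (0:ℝ) ≤ 1/((x:ℝ)+1) := by positivity
    linarith
  have swap : ∑ p ∈ (x+1).primesBelow, ∑ n ∈ Icc p x, ((1:ℝ)/n - 1/(n+1))
      = ∑ n ∈ Icc 2 x, ∑ p ∈ (n+1).primesBelow, ((1:ℝ)/n - 1/(n+1)) := by
    apply Finset.sum_comm'
    intro p n
    simp only [Nat.mem_primesBelow, Finset.mem_Icc]
    constructor
    · rintro ⟨⟨hpx, hp⟩, hpn, hnx⟩
      exact ⟨⟨by omega, hp⟩, hp.two_le.trans hpn, hnx⟩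
    · rintro ⟨⟨hpn, hp⟩, h2n, hnx⟩
      exact ⟨⟨by omega, hp⟩, by omega, hnx⟩
  have card_form : ∑ n ∈ Icc 2 x, ∑ p ∈ (n+1).primesBelow, ((1:ℝ)/n - 1/(n+1))
      = ∑ n ∈ Icc 2 x, ((n+1).primesBelow.card : ℝ) * ((1:ℝ)/n - 1/(n+1)) := by
    apply Finset.sum_congr rfl
    intro n _
    rw [Finset.sum_const, nsmul_eq_mul]
  have drop : ∑ n ∈ Icc 4096 x, ((n+1).primesBelow.card : ℝ) * ((1:ℝ)/n - 1/(n+1))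
      ≤ ∑ n ∈ Icc 2 x, ((n+1).primesBelow.card : ℝ) * ((1:ℝ)/n - 1/(n+1)) := by
    apply Finset.sum_le_sum_of_subset_of_nonneg
    · apply Finset.Icc_subset_Icc_left; norm_num
    · intro n hn _
      rw [Finset.mem_Icc] at hn
      have h1 : (1:ℝ) ≤ (n:ℝ) := by exact_mod_cast (by omega : 1 ≤ n)
      have : (1:ℝ)/((n:ℝ)+1) ≤ 1/(n:ℝ) := by
        apply div_le_div_of_nonneg_left (by norm_num) (by linarith) (by linarith)
      exact mul_nonneg (Nat.cast_nonneg _) (by linarith)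
  have term : ∀ n ∈ Icc 4096 x,
      (1/8) * (Real.log (Real.log ((n:ℝ)+2)) - Real.log (Real.log ((n:ℝ)+1)))
        ≤ ((n+1).primesBelow.card : ℝ) * ((1:ℝ)/n - 1/(n+1)) := by
    intro n hn
    rw [Finset.mem_Icc] at hn
    have hn4096 : 4096 ≤ n := hn.1
    have hnR : (4096:ℝ) ≤ (n:ℝ) := by exact_mod_cast hn4096
    have hlogn : (0:ℝ) < Real.log n := Real.log_pos (by linarith)
    have hcheb := chebyshev_lower hn4096
    have hd : ((1:ℝ)/n - 1/(n+1)) = 1/((n:ℝ)*((n:ℝ)+1)) := by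
      field_simp
      ring
    have hstep := loglog_step (show 2 ≤ n by omega)
    have hgd : 1/(8 * Real.log n) * (1/((n:ℝ)+1))
        ≤ ((n+1).primesBelow.card : ℝ) * ((1:ℝ)/n - 1/(n+1)) := by
      rw [hd]
      calc 1/(8 * Real.log n) * (1/((n:ℝ)+1))
          = ((n:ℝ)/(8 * Real.log n)) * (1/((n:ℝ)*((n:ℝ)+1))) := by
            field_simp
        _ ≤ ((n+1).primesBelow.card : ℝ) * (1/((n:ℝ)*((n:ℝ)+1))) := by
            apply mul_le_mul_of_nonneg_right hcheb (by positivity)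
    calc (1/8) * (Real.log (Real.log ((n:ℝ)+2)) - Real.log (Real.log ((n:ℝ)+1)))
        ≤ (1/8) * (1 / (((n:ℝ)+1) * Real.log n)) := by linarith
      _ = 1/(8 * Real.log n) * (1/((n:ℝ)+1)) := by
          field_simp
      _ ≤ _ := hgd
  have sumterm : (1/8) * (Real.log (Real.log ((x:ℝ)+2)) - K)
      ≤ ∑ n ∈ Icc 4096 x, ((n+1).primesBelow.card : ℝ) * ((1:ℝ)/n - 1/(n+1)) := by
    have htel := telescope_loglog (show 1 ≤ 4096 by norm_num) x (by omega)
    calc (1/8) * (Real.log (Real.log ((x:ℝ)+2)) - K)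
        = ∑ n ∈ Icc 4096 x, (1/8) * (Real.log (Real.log ((n:ℝ)+2)) - Real.log (Real.log ((n:ℝ)+1))) := by
          rw [← Finset.mul_sum, htel]
          norm_num [K]
      _ ≤ _ := Finset.sum_le_sum term
  linarith [step1, swap ▸ step1]

lemma Ioc_dvd_card (a b p : ℕ) (hab : a ≤ b) :
    ((Ioc a b).filter (p ∣ ·)).card = b/p - a/p := by
  classical
  have hu : Ioc 0 a ∪ Ioc a b = Ioc 0 b := Finset.Ioc_union_Ioc_eq_Ioc (Nat.zero_le a) hab
  have hdisj : Disjoint (Ioc 0 a) (Ioc a b) := by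
    rw [Finset.disjoint_left]
    intro t ht1 ht2
    rw [Finset.mem_Ioc] at ht1 ht2
    omega
  have hcard : ((Ioc 0 a).filter (p ∣ ·)).card + ((Ioc a b).filter (p ∣ ·)).card
      = ((Ioc 0 b).filter (p ∣ ·)).card := by
    rw [← hu, Finset.filter_union, Finset.card_union_of_disjoint]
    exact Finset.disjoint_filter_filter hdisj
  rw [Nat.Ioc_filter_dvd_card_eq_div, Nat.Ioc_filter_dvd_card_eq_div] at hcard
  have hdiv : a / p ≤ b / p := Nat.div_le_div_right hab
  omega

lemma interval_count_lower {n h p : ℕ} (hn : 1 ≤ n) (hp : 1 ≤ p) :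
    (h:ℝ)/p - 1 ≤ (((Icc n (n+h-1)).filter (p ∣ ·)).card : ℝ) := by
  have hicc : Icc n (n+h-1) = Ioc (n-1) (n+h-1) := by
    ext t; simp [Finset.mem_Icc, Finset.mem_Ioc]; omega
  rw [hicc, Ioc_dvd_card _ _ _ (by omega)]
  have hb : n + h - 1 = (n-1) + h := by omega
  have hnat : h/p ≤ (n+h-1)/p - (n-1)/p := by
    rw [hb]
    have h1 : (n-1)/p + h/p ≤ ((n-1) + h)/p := by
      rw [Nat.le_div_iff_mul_le (by omega)]
      have := Nat.div_mul_le_self (n-1) p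
      have := Nat.div_mul_le_self h p
      nlinarith [Nat.div_mul_le_self (n-1) p, Nat.div_mul_le_self h p]
    omega
  have hreal : (h:ℝ)/p - 1 ≤ ((h/p : ℕ) : ℝ) := by
    have hmod := Nat.div_add_mod h p
    have hmlt : h % p < p := Nat.mod_lt _ (by omega)
    have hpR : (0:ℝ) < p := by exact_mod_cast hp
    rw [sub_le_iff_le_add, div_le_iff₀ hpR]
    have : (h:ℝ) = (p:ℝ) * ((h/p : ℕ):ℝ) + ((h % p : ℕ):ℝ) := by exact_mod_cast hmod.symm
    have h2 : ((h % p : ℕ):ℝ) < (p:ℝ) := by exact_mod_cast hmlt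
    nlinarith
  calc (h:ℝ)/p - 1 ≤ ((h/p : ℕ) : ℝ) := hreal
    _ ≤ _ := by exact_mod_cast hnat

lemma interval_delta_lower {n h : ℕ} (hn : 1 ≤ n) (hh : 4096 ≤ h) :
    (h:ℝ) * ((1/8) * (Real.log (Real.log ((h:ℝ)+2)) - K)) - ((h:ℝ)+1)
      ≤ ∑ k ∈ Icc n (n+h-1), (Delta k : ℝ) := by
  classical
  set I := Icc n (n+h-1) with hI
  -- double counting
  have swap : ∑ p ∈ (h+1).primesBelow, ((I.filter (p ∣ ·)).card : ℝ)
      = ∑ k ∈ I, (((h+1).primesBelow.filter (· ∣ k)).card : ℝ) := by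
    simp only [Finset.card_filter]
    push_cast
    rw [Finset.sum_comm]
  have bound2 : ∀ k ∈ I, (((h+1).primesBelow.filter (· ∣ k)).card : ℝ) ≤ (Delta k : ℝ) := by
    intro k hk
    rw [Finset.mem_Icc] at hk
    have hk0 : k ≠ 0 := by omega
    have : ((h+1).primesBelow.filter (· ∣ k)) =
        (Finset.range (h+1)).filter (fun p => p.Prime ∧ p ∣ k) := by
      rw [Nat.primesBelow, Finset.filter_filter]
    rw [this]
    exact_mod_cast card_filter_dvd_le_Delta hk0 _
  have step : ∑ p ∈ (h+1).primesBelow, ((h:ℝ)/p - 1)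
      ≤ ∑ k ∈ I, (Delta k : ℝ) := by
    calc ∑ p ∈ (h+1).primesBelow, ((h:ℝ)/p - 1)
        ≤ ∑ p ∈ (h+1).primesBelow, ((I.filter (p ∣ ·)).card : ℝ) := by
          apply Finset.sum_le_sum
          intro p hp
          rw [Nat.mem_primesBelow] at hp
          exact interval_count_lower hn hp.2.one_lt.le
      _ = _ := swap
      _ ≤ _ := Finset.sum_le_sum bound2
  have expand : ∑ p ∈ (h+1).primesBelow, ((h:ℝ)/p - 1)
      = (h:ℝ) * (∑ p ∈ (h+1).primesBelow, (1:ℝ)/p) - ((h+1).primesBelow.card : ℝ) := by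
    rw [Finset.sum_sub_distrib, Finset.sum_const, Finset.mul_sum]
    simp only [nsmul_eq_mul, mul_one]
    congr 1
    apply Finset.sum_congr rfl; intro p _; ring
  have hcard : ((h+1).primesBelow.card : ℝ) ≤ (h:ℝ) + 1 := by
    have : (h+1).primesBelow.card ≤ h + 1 := by
      calc (h+1).primesBelow.card ≤ (Finset.range (h+1)).card :=
            Finset.card_le_card (Finset.filter_subset _ _)
        _ = h + 1 := Finset.card_range _
    exact_mod_cast this
  have hm := mertens_lower hh
  have hmul : (h:ℝ) * ((1/8) * (Real.log (Real.log ((h:ℝ)+2)) - K))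
      ≤ (h:ℝ) * (∑ p ∈ (h+1).primesBelow, (1:ℝ)/p) :=
    mul_le_mul_of_nonneg_left hm (Nat.cast_nonneg h)
  linarith [step, expand ▸ step]

/-- For every integer `μ ≥ 2` there are `c > 0` and `M` such that for all `m ≥ M`,
`∑_{l=(μ−1)m}^{μm−1} (Δ(l!) − Δ(((μ−1)m − 1)!)) ≥ c m² ln (ln m)`. -/
theorem sum_Delta_factorial_diff_ge (μ : ℕ) (hμ : 2 ≤ μ) :
    ∃ c : ℝ, 0 < c ∧ ∃ M : ℕ, 0 < M ∧ ∀ m : ℕ, M ≤ m →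
      ∑ l ∈ Finset.Icc ((μ - 1) * m) (μ * m - 1),
          ((Delta (Nat.factorial l) : ℝ) -
            (Delta (Nat.factorial ((μ - 1) * m - 1)) : ℝ))
        ≥ c * (m : ℝ) ^ 2 * Real.log (Real.log m) := by
  refine ⟨1/256, by norm_num, ⌈Real.exp (Real.exp 16500)⌉₊, ?_, ?_⟩
  · exact Nat.ceil_pos.mpr (Real.exp_pos _)
  intro m hm
  -- size facts
  have hmR : Real.exp (Real.exp 16500) ≤ (m:ℝ) :=
    (Nat.le_ceil _).trans (by exact_mod_cast hm)
  have hexp1 : (16501:ℝ) ≤ Real.exp 16500 := by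
    have := Real.add_one_le_exp (16500:ℝ)
    linarith
  have hexp2 : Real.exp 16500 ≤ Real.exp (Real.exp 16500) := by
    apply Real.exp_le_exp.mpr; linarith [Real.add_one_le_exp (16500:ℝ)]
  have hm16501 : (16501:ℝ) ≤ (m:ℝ) := by linarith
  have hmN : 16501 ≤ m := by exact_mod_cast hm16501
  have hm1 : 1 ≤ m := by omega
  have hlogm : Real.exp 16500 ≤ Real.log m := by
    calc Real.exp 16500 = Real.log (Real.exp (Real.exp 16500)) := (Real.log_exp _).symm
      _ ≤ Real.log m := Real.log_le_log (Real.exp_pos _) hmR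
  have hlogm_pos : (0:ℝ) < Real.log m := lt_of_lt_of_le (by positivity) hlogm
  have hLL : (16500:ℝ) ≤ Real.log (Real.log m) := by
    calc (16500:ℝ) = Real.log (Real.exp 16500) := (Real.log_exp _).symm
      _ ≤ Real.log (Real.log m) := Real.log_le_log (Real.exp_pos _) hlogm
  set lnlnm := Real.log (Real.log m) with hlnlnm
  -- set up interval data
  set n := (μ - 1) * m with hn
  set h := m / 2 with hh
  set b := μ * m - 1 with hb
  have hn1 : 1 ≤ n := by
    have : 1 ≤ μ - 1 := by omega
    calc 1 = 1 * 1 := by norm_num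
      _ ≤ (μ-1) * m := Nat.mul_le_mul this hm1
  have hnm : n + m = μ * m := by
    have h2 : (μ - 1) * m = μ * m - m := Nat.sub_one_mul μ m
    have h3 : m ≤ μ * m := Nat.le_mul_of_pos_left m (by omega)
    omega
  have hbval : b = n + m - 1 := by omega
  have hh4096 : 4096 ≤ h := by omega
  have hhm : 2 * h ≤ m := by omega
  have hhm1 : m ≤ 2 * h + 1 := by omega
  have hhR : (h:ℝ) ≤ (m:ℝ)/2 := by
    have : (2*h : ℕ) ≤ (m:ℕ) := hhm
    have := (Nat.cast_le (α := ℝ)).mpr this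
    push_cast at this
    linarith
  have hhR2 : ((m:ℝ)-1)/2 ≤ (h:ℝ) := by
    have := (Nat.cast_le (α := ℝ)).mpr hhm1
    push_cast at this
    linarith
  -- rewrite summands
  have hsum_rw : ∀ l ∈ Icc n b, ((Delta (Nat.factorial l) : ℝ) -
      (Delta (Nat.factorial (n - 1)) : ℝ)) = ∑ k ∈ Icc n l, (Delta k : ℝ) := by
    intro l hl
    rw [Finset.mem_Icc] at hl
    have hjl : n - 1 ≤ l := by omega
    have := Delta_factorial_sub hjl
    rw [show n - 1 + 1 = n by omega] at this
    rw [this]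
    push_cast
    ring
  rw [ge_iff_le, Finset.sum_congr rfl hsum_rw]
  -- lower bound via the upper-half of the l-range
  have hsub : Icc (n+h-1) b ⊆ Icc n b := Finset.Icc_subset_Icc_left (by omega)
  have inner_nonneg : ∀ l ∈ Icc n b, (0:ℝ) ≤ ∑ k ∈ Icc n l, (Delta k : ℝ) :=
    fun l _ => Finset.sum_nonneg (fun k _ => by positivity)
  have step1 : ∑ l ∈ Icc (n+h-1) b, ∑ k ∈ Icc n l, (Delta k : ℝ)
      ≤ ∑ l ∈ Icc n b, ∑ k ∈ Icc n l, (Delta k : ℝ) :=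
    Finset.sum_le_sum_of_subset_of_nonneg hsub (fun l hl _ => inner_nonneg l hl)
  -- T : lower bound on the inner sums
  set T := ∑ k ∈ Icc n (n+h-1), (Delta k : ℝ) with hT
  have hTbound : (h:ℝ) * ((1/8) * (Real.log (Real.log ((h:ℝ)+2)) - K)) - ((h:ℝ)+1) ≤ T :=
    interval_delta_lower hn1 hh4096
  have inner_ge : ∀ l ∈ Icc (n+h-1) b, T ≤ ∑ k ∈ Icc n l, (Delta k : ℝ) := by
    intro l hl
    rw [Finset.mem_Icc] at hl
    apply Finset.sum_le_sum_of_subset_of_nonneg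
    · exact Finset.Icc_subset_Icc_right hl.1
    · intro k _ _; positivity
  have step2 : (Icc (n+h-1) b).card • T ≤ ∑ l ∈ Icc (n+h-1) b, ∑ k ∈ Icc n l, (Delta k : ℝ) := by
    rw [← Finset.sum_const]
    exact Finset.sum_le_sum inner_ge
  have hcard : (Icc (n+h-1) b).card = m - h + 1 := by
    rw [Nat.card_Icc]
    omega
  have hcardR : (m:ℝ)/2 ≤ ((Icc (n+h-1) b).card : ℝ) := by
    rw [hcard]
    have : m - h + 1 ≥ m - h := by omega
    have hmh : (m - h : ℕ) = (m:ℕ) - h := rfl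
    have hc : ((m - h + 1 : ℕ):ℝ) = (m:ℝ) - (h:ℝ) + 1 := by
      have : h ≤ m := by omega
      push_cast [this]
      ring
    rw [hc]
    linarith
  -- numeric estimates
  have hK : K ≤ 4096 := by
    have h1 : Real.log 4097 ≤ 4096 := by
      have := Real.log_le_sub_one_of_pos (show (0:ℝ) < 4097 by norm_num)
      linarith
    have h2 : (0:ℝ) < Real.log 4097 := Real.log_pos (by norm_num)
    calc K = Real.log (Real.log 4097) := rfl
      _ ≤ Real.log 4096 := Real.log_le_log h2 h1
      _ ≤ 4096 := by
          have := Real.log_le_sub_one_of_pos (show (0:ℝ) < 4096 by norm_num)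
          linarith
  have hL : lnlnm - 1 ≤ Real.log (Real.log ((h:ℝ)+2)) := by
    have hs : Real.sqrt m ^ 2 = (m:ℝ) := Real.sq_sqrt (by positivity)
    have hs3 : (3:ℝ) ≤ Real.sqrt m := by
      have : (9:ℝ) ≤ (m:ℝ) := by linarith
      calc (3:ℝ) = Real.sqrt 9 := by
            rw [show (9:ℝ) = 3^2 by norm_num, Real.sqrt_sq]; norm_num
        _ ≤ _ := Real.sqrt_le_sqrt this
    have hsqh : Real.sqrt m ≤ (h:ℝ) + 2 := by nlinarith
    have hlog_h : (1/2) * Real.log m ≤ Real.log ((h:ℝ)+2) := by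
      calc (1/2) * Real.log m = Real.log (Real.sqrt m) := by
            rw [Real.log_sqrt (by positivity)]; ring
        _ ≤ Real.log ((h:ℝ)+2) := Real.log_le_log (Real.sqrt_pos.mpr (by positivity)) hsqh
    have hhalf_pos : (0:ℝ) < (1/2) * Real.log m := by positivity
    calc lnlnm - 1 ≤ lnlnm - Real.log 2 := by
          have := Real.log_le_sub_one_of_pos (show (0:ℝ) < 2 by norm_num)
          linarith
      _ = Real.log ((1/2) * Real.log m) := by
          rw [Real.log_mul (by norm_num) hlogm_pos.ne']
          have : Real.log (1/2 : ℝ) = - Real.log 2 := by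
            rw [one_div, Real.log_inv]
          rw [this]; ring
      _ ≤ Real.log (Real.log ((h:ℝ)+2)) := Real.log_le_log hhalf_pos hlog_h
  -- combine: T ≥ (h/32) lnlnm
  have hhRpos : (4096:ℝ) ≤ (h:ℝ) := by exact_mod_cast hh4096
  have hT2 : (h:ℝ)/32 * lnlnm ≤ T := by
    have e1 : (1/8:ℝ) * ((lnlnm - 1) - 4096) ≤ (1/8) * (Real.log (Real.log ((h:ℝ)+2)) - K) := by
      have : (lnlnm - 1) - 4096 ≤ Real.log (Real.log ((h:ℝ)+2)) - K := by linarith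
      linarith
    have e2 : lnlnm - 4097 ≥ lnlnm / 2 := by linarith
    have e3 : (h:ℝ) * ((1/8) * (Real.log (Real.log ((h:ℝ)+2)) - K))
        ≥ (h:ℝ) * ((1/16) * lnlnm) := by
      apply mul_le_mul_of_nonneg_left _ (by positivity)
      calc (1/16:ℝ) * lnlnm = (1/8) * (lnlnm/2) := by ring
        _ ≤ (1/8) * (lnlnm - 4097) := by linarith
        _ = (1/8) * ((lnlnm - 1) - 4096) := by ring
        _ ≤ _ := e1
    have e4 : (h:ℝ)/32 * lnlnm + ((h:ℝ)+1) ≤ (h:ℝ) * ((1/16) * lnlnm) := by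
      have h64 : (64:ℝ) ≤ lnlnm := by linarith
      have h5 : (h:ℝ)/32 * 64 ≤ (h:ℝ)/32 * lnlnm :=
        mul_le_mul_of_nonneg_left h64 (by positivity)
      linarith
    linarith
  -- final combination
  have final : (1/256:ℝ) * (m:ℝ)^2 * lnlnm ≤ ((Icc (n+h-1) b).card : ℝ) * T := by
    have hTnn : (0:ℝ) ≤ T := by
      have : (0:ℝ) ≤ (h:ℝ)/32 * lnlnm := by positivity
      linarith
    have hc2 : (0:ℝ) ≤ ((Icc (n+h-1) b).card : ℝ) := Nat.cast_nonneg _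
    have hm4 : (m:ℝ)/4 ≤ (h:ℝ) := by linarith
    calc (1/256:ℝ) * (m:ℝ)^2 * lnlnm = ((m:ℝ)/2) * ((m:ℝ)/4/32 * lnlnm) := by ring
      _ ≤ ((m:ℝ)/2) * ((h:ℝ)/32 * lnlnm) := by
          apply mul_le_mul_of_nonneg_left _ (by positivity)
          apply mul_le_mul_of_nonneg_right _ (by linarith)
          linarith
      _ ≤ ((m:ℝ)/2) * T := mul_le_mul_of_nonneg_left hT2 (by positivity)
      _ ≤ ((Icc (n+h-1) b).card : ℝ) * T := mul_le_mul_of_nonneg_right hcardR hTnn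
  have := step2
  rw [nsmul_eq_mul] at this
  calc (1/256:ℝ) * (m:ℝ)^2 * lnlnm ≤ ((Icc (n+h-1) b).card : ℝ) * T := final
    _ ≤ ∑ l ∈ Icc (n+h-1) b, ∑ k ∈ Icc n l, (Delta k : ℝ) := this
    _ ≤ _ := step1
end
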